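/- If the Banach algebra 𝒦(X) of compact operators on a real Banach space X has a λ-bounded right approximate identity (λ-BRAI), then X has the λ-bounded compact approximation property (λ-BCAP). -/

import Mathlib

set_option maxSynthPendingDepth 3

open Filter Topology Metric NormedSpace Function

/-- `u` is a finite-rank operator: its range is finite-dimensional. -/
def FinRankOp {X Y : Type*} [NormedAddCommGroup X] [NormedSpace ℝ X]
    [NormedAddCommGroup Y] [NormedSpace ℝ Y] (u : X →L[ℝ] Y) : Prop :=
  FiniteDimensional ℝ (LinearMap.range (u : X →ₗ[ℝ] Y))

/-- `u` is approximable: a limit in operator norm of finite-rank operators. -/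
def ApproxOp {X Y : Type*} [NormedAddCommGroup X] [NormedSpace ℝ X]
    [NormedAddCommGroup Y] [NormedSpace ℝ Y] (u : X →L[ℝ] Y) : Prop :=
  u ∈ closure {f : X →L[ℝ] Y | FinRankOp f}

/-- `u` is a compact operator: it maps the closed unit ball to a relatively compact set. -/
def CompactOp {X Y : Type*} [NormedAddCommGroup X] [NormedSpace ℝ X]
    [NormedAddCommGroup Y] [NormedSpace ℝ Y] (u : X →L[ℝ] Y) : Prop :=
  IsCompact (closure (u '' Metric.closedBall 0 1))

/-- `Y` has the λ-bounded compact approximation property (λ-BCAP). -/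
def HasBCAP (Y : Type*) [NormedAddCommGroup Y] [NormedSpace ℝ Y] (l : ℝ) : Prop :=
  ∀ K : Set Y, IsCompact K → ∀ ε : ℝ, 0 < ε →
    ∃ u : Y →L[ℝ] Y, CompactOp u ∧ ‖u‖ ≤ l ∧ ∀ x ∈ K, ‖u x - x‖ < ε

/-- The Banach algebra 𝒦(X) of compact operators on `X` has a λ-bounded right approximate
identity: a net `(e i)` of compact operators with `‖e i‖ ≤ λ` such that
`‖x * e i - x‖ → 0` for every compact operator `x` (multiplication is composition). -/
def CompactAlgHasBRAI (X : Type u) [NormedAddCommGroup X] [NormedSpace ℝ X] (l : ℝ) : Prop :=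
  ∃ (ι : Type u) (_ : Preorder ι) (_ : Nonempty ι) (_ : IsDirected ι (· ≤ ·))
    (e : ι → X →L[ℝ] X),
    (∀ i, CompactOp (e i) ∧ ‖e i‖ ≤ l) ∧
    ∀ x : X →L[ℝ] X, CompactOp x →
      Tendsto (fun i => ‖x.comp (e i) - x‖) atTop (𝓝 (0 : ℝ))

lemma compactOp_iff {X Y : Type*} [NormedAddCommGroup X] [NormedSpace ℝ X]
    [NormedAddCommGroup Y] [NormedSpace ℝ Y] (u : X →L[ℝ] Y) :
    CompactOp u ↔ IsCompactOperator u := by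
  have h := isCompactOperator_iff_isCompact_closure_image_closedBall
    (u : X →ₗ[ℝ] Y) one_pos
  simp only [ContinuousLinearMap.coe_coe] at h
  rw [CompactOp]
  exact h.symm

lemma compactOp_zero {X Y : Type*} [NormedAddCommGroup X] [NormedSpace ℝ X]
    [NormedAddCommGroup Y] [NormedSpace ℝ Y] :
    CompactOp (0 : X →L[ℝ] Y) := by
  rw [compactOp_iff]
  simpa using isCompactOperator_zero

lemma compactOp_smulRight {X : Type*} [NormedAddCommGroup X] [NormedSpace ℝ X]
    (f : X →L[ℝ] ℝ) (z : X) : CompactOp (f.smulRight z) := by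
  have hcpt : IsCompact ((fun c : ℝ => c • z) '' Set.Icc (-‖f‖) ‖f‖) :=
    isCompact_Icc.image (continuous_id.smul continuous_const)
  refine hcpt.of_isClosed_subset isClosed_closure (closure_minimal ?_ hcpt.isClosed)
  rintro _ ⟨x, hx, rfl⟩
  refine ⟨f x, abs_le.mp ?_, by simp⟩
  calc |f x| ≤ ‖f‖ * ‖x‖ := f.le_opNorm x
    _ ≤ ‖f‖ * 1 := by
        have hx1 : ‖x‖ ≤ 1 := mem_closedBall_zero_iff.mp hx
        exact mul_le_mul_of_nonneg_left hx1 (norm_nonneg f)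
    _ = ‖f‖ := mul_one _

lemma convex_compactOp_ball {X : Type*} [NormedAddCommGroup X] [NormedSpace ℝ X] (l : ℝ) :
    Convex ℝ {T : X →L[ℝ] X | CompactOp T ∧ ‖T‖ ≤ l} := by
  rintro T hT S hS a b ha hb hab
  refine ⟨?_, ?_⟩
  · have hT1 : IsCompactOperator ⇑T := (compactOp_iff T).mp hT.1
    have hS1 : IsCompactOperator ⇑S := (compactOp_iff S).mp hS.1
    rw [compactOp_iff]
    have h1 : IsCompactOperator (a • (T : X → X) + b • (S : X → X)) :=
      (hT1.smul a).add (hS1.smul b)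
    have h2 : ⇑(a • T + b • S) = a • (T : X → X) + b • (S : X → X) := by
      ext x; simp
    rwa [h2]
  · calc ‖a • T + b • S‖ ≤ ‖a • T‖ + ‖b • S‖ := norm_add_le _ _
      _ = a * ‖T‖ + b * ‖S‖ := by
          rw [norm_smul, norm_smul, Real.norm_eq_abs, Real.norm_eq_abs,
            abs_of_nonneg ha, abs_of_nonneg hb]
      _ ≤ a * l + b * l := by
          gcongr
          exacts [hT.2, hS.2]
      _ = l := by rw [← add_mul, hab, one_mul]

set_option maxHeartbeats 1000000

/-- If 𝒦(X) has a λ-BRAI then `X` has λ-BCAP. -/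
theorem bcap_of_compact_brai (X : Type u) [NormedAddCommGroup X] [NormedSpace ℝ X]
    [CompleteSpace X] (l : ℝ) (hl : 1 ≤ l)
    (h : CompactAlgHasBRAI X l) : HasBCAP X l := by
  classical
  obtain ⟨ι, _pre, _ne, _dir, e, he, hlim⟩ := h
  intro K hK ε hε
  -- trivial case: X a subsingleton
  rcases subsingleton_or_nontrivial X with hX | hX
  · refine ⟨0, compactOp_zero, by simpa using le_trans zero_le_one hl, fun x _ => ?_⟩
    have : x = 0 := Subsingleton.elim x 0
    simp [this, hε]
  haveI : (atTop : Filter ι).NeBot := atTop_neBot_iff.mpr ⟨_ne, _dir⟩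
  -- weak convergence of `e i` to the identity
  have hweak : ∀ (f : X →L[ℝ] ℝ) (x : X),
      Tendsto (fun i => f (e i x)) atTop (𝓝 (f x)) := by
    intro f x
    obtain ⟨z, hz⟩ := exists_ne (0 : X)
    have hzpos : 0 < ‖z‖ := norm_pos_iff.mpr hz
    set T : X →L[ℝ] X := f.smulRight z with hT
    have h1 := hlim T (compactOp_smulRight f z)
    have key : ∀ i, |f (e i x) - f x| ≤ ‖T.comp (e i) - T‖ * ‖x‖ / ‖z‖ := by
      intro i
      have h2 : (T.comp (e i) - T) x = (f (e i x) - f x) • z := by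
        simp [hT, sub_smul]
      have h3 : ‖(T.comp (e i) - T) x‖ ≤ ‖T.comp (e i) - T‖ * ‖x‖ :=
        (T.comp (e i) - T).le_opNorm x
      rw [h2, norm_smul, Real.norm_eq_abs] at h3
      exact (le_div_iff₀ hzpos).mpr h3
    have h4 : Tendsto (fun i => |f (e i x) - f x|) atTop (𝓝 0) := by
      have h5 : Tendsto (fun i => ‖T.comp (e i) - T‖ * ‖x‖ / ‖z‖) atTop (𝓝 0) := by
        have := (h1.mul_const ‖x‖).div_const ‖z‖
        simpa using this
      exact squeeze_zero (fun i => abs_nonneg _) key h5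
    rw [tendsto_iff_dist_tendsto_zero]
    simpa [Real.dist_eq] using h4
  -- a finite δ-net of K
  set δ : ℝ := ε / (3 * (l + 1)) with hδdef
  have hl0 : (0 : ℝ) ≤ l := le_trans zero_le_one hl
  have hδ : 0 < δ := div_pos hε (by linarith)
  obtain ⟨s, hsfin, hscov⟩ := (Metric.totallyBounded_iff.mp hK.totallyBounded) δ hδ
  haveI : Fintype ↥s := hsfin.fintype
  -- evaluation map into the product space
  set Φ : (X →L[ℝ] X) →ₗ[ℝ] (↥s → X) :=
    { toFun := fun u => fun j => u (j : X)
      map_add' := fun u v => by ext j; simp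
      map_smul' := fun c u => by ext j; simp } with hΦdef
  set target : ↥s → X := fun j => (j : X) with htarget
  -- coordinate inclusion as a continuous linear map
  set Sg : (j : ↥s) → X →L[ℝ] (↥s → X) := fun j =>
    LinearMap.mkContinuous (LinearMap.single ℝ (fun _ : ↥s => X) j) 1
      (fun x => by simp [LinearMap.single_apply, Pi.norm_single]) with hSg
  have hSapp : ∀ (j : ↥s) (x : X), Sg j x = Pi.single j x := fun j x => rfl
  -- Mazur / Hahn-Banach: target lies in the closure of the convex hull
  have hmem : target ∈ closure (convexHull ℝ (Φ '' Set.range e)) := by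
    by_contra hmem
    obtain ⟨F, c, hFlt, hFgt⟩ := geometric_hahn_banach_closed_point
      ((convex_convexHull ℝ _).closure) isClosed_closure hmem
    have hdecomp : ∀ v : ↥s → X, F v = ∑ j, F (Sg j (v j)) := by
      intro v
      conv_lhs => rw [← Finset.univ_sum_single v]
      rw [map_sum]
      exact Finset.sum_congr rfl fun j _ => by rw [hSapp]
    have htd : Tendsto (fun i => F (Φ (e i))) atTop (𝓝 (F target)) := by
      rw [hdecomp target]
      refine Tendsto.congr (fun i => (hdecomp (Φ (e i))).symm) ?_
      exact tendsto_finset_sum _ fun j _ => hweak (F.comp (Sg j)) (j : X)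
    have hle : F target ≤ c := by
      refine le_of_tendsto htd (Eventually.of_forall fun i => ?_)
      exact (hFlt _ (subset_closure (subset_convexHull ℝ _ ⟨e i, ⟨i, rfl⟩, rfl⟩))).le
    linarith
  obtain ⟨y, hy, hdist⟩ := Metric.mem_closure_iff.mp hmem (ε / 3) (by positivity)
  have himg : Φ '' convexHull ℝ (Set.range e) = convexHull ℝ (Φ '' Set.range e) :=
    Φ.image_convexHull (Set.range e)
  rw [← himg] at hy
  obtain ⟨u, hu, rfl⟩ := hy
  have hsub : Set.range e ⊆ {T : X →L[ℝ] X | CompactOp T ∧ ‖T‖ ≤ l} := by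
    rintro _ ⟨i, rfl⟩; exact he i
  have hu2 : CompactOp u ∧ ‖u‖ ≤ l :=
    convexHull_min hsub (convex_compactOp_ball l) hu
  refine ⟨u, hu2.1, hu2.2, fun x hx => ?_⟩
  obtain ⟨y0, hy0s, hxy0⟩ := Set.mem_iUnion₂.mp (hscov hx)
  have hxy0' : ‖x - y0‖ < δ := by rwa [← dist_eq_norm]
  set j : ↥s := ⟨y0, hy0s⟩ with hj
  have hmid : ‖u y0 - y0‖ < ε / 3 := by
    have h1 : dist (Φ u j) (target j) ≤ dist (Φ u) target := dist_le_pi_dist _ _ j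
    have h2 : dist (Φ u) target < ε / 3 := by rwa [dist_comm] at hdist
    have h3 : dist (Φ u j) (target j) = ‖u y0 - y0‖ := by
      exact dist_eq_norm (u y0) y0
    linarith [h1.trans_lt h2, le_of_eq h3.symm]
  have hsplit : u x - x = u (x - y0) + (u y0 - y0) + (y0 - x) := by
    simp only [map_sub]; abel
  have hδeq : (l + 1) * δ = ε / 3 := by
    rw [hδdef]; field_simp
  calc ‖u x - x‖ ≤ ‖u (x - y0)‖ + ‖u y0 - y0‖ + ‖y0 - x‖ := by
        rw [hsplit]; exact norm_add₃_le
    _ ≤ l * δ + ‖u y0 - y0‖ + ‖y0 - x‖ := by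
        have := u.le_opNorm (x - y0)
        have h5 : ‖u‖ * ‖x - y0‖ ≤ l * δ :=
          mul_le_mul hu2.2 hxy0'.le (norm_nonneg _) hl0
        gcongr
        exact this.trans h5
    _ < l * δ + ε / 3 + δ := by
        have h6 : ‖y0 - x‖ < δ := by rwa [norm_sub_rev]
        gcongr
    _ = (l + 1) * δ + ε / 3 := by ring
    _ = ε / 3 + ε / 3 := by rw [hδeq]
    _ < ε := by linarith
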